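/- arXiv:1808.04607 — 7 statements merged into one kernel-verified Lean document; each statement's English description precedes it below -/
import Mathlib

section
/- For all x > 0 and x' > 0, the integral over t from -1 to 1 of (1+t^2)/sqrt(x^2 + x'^2 - 2 x x' t) dt equals 4(10 max{x,x'}^2 + min{x,x'}^2)/(15 max{x,x'}^3). -/
open Real Set MeasureTheory intervalIntegral

lemma key (x x' : ℝ) (hx' : 0 < x') (hle : x' ≤ x) :
    (∫ t in (-1:ℝ)..1, (1 + t^2) / Real.sqrt (x^2 + x'^2 - 2*x*x'*t))
      = 4 * (10 * x^2 + x'^2) / (15 * x^3) := by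
  have hx : 0 < x := lt_of_lt_of_le hx' hle
  set a : ℝ := x^2 + x'^2 with ha
  set b : ℝ := 2*x*x' with hb
  have hb0 : 0 < b := by positivity
  have hab : b ≤ a := by nlinarith
  have hupos : ∀ t : ℝ, t < 1 → 0 < a - b*t := by intro t ht; nlinarith
  set F : ℝ → ℝ := fun t =>
    -(2/b^3) * ((b^2+a^2) * Real.sqrt (a - b*t) - (2*a/3) * (Real.sqrt (a - b*t))^3
      + (1/5) * (Real.sqrt (a - b*t))^5) with hF
  have hcont : ContinuousOn F (Icc (-1) 1) := by
    apply Continuous.continuousOn; fun_prop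
  have hderiv : ∀ t ∈ Ioo (-1:ℝ) 1, HasDerivAt F ((1 + t^2) / Real.sqrt (a - b*t)) t := by
    intro t ht
    have hu : 0 < a - b*t := hupos t ht.2
    have hs : 0 < Real.sqrt (a - b*t) := Real.sqrt_pos.2 hu
    have hu' : HasDerivAt (fun t : ℝ => a - b*t) (-b) t := by
      simpa using ((hasDerivAt_id t).const_mul b).const_sub a
    have hsq : HasDerivAt (fun t : ℝ => Real.sqrt (a - b*t)) (1/(2*Real.sqrt (a-b*t)) * (-b)) t :=
      (Real.hasDerivAt_sqrt (ne_of_gt hu)).comp t hu'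
    set s := Real.sqrt (a - b*t) with hsdef
    have h1 : HasDerivAt (fun t : ℝ => (b^2+a^2) * Real.sqrt (a - b*t))
        ((b^2+a^2) * (1/(2*s) * (-b))) t := hsq.const_mul _
    have h3 : HasDerivAt (fun t : ℝ => (2*a/3) * (Real.sqrt (a - b*t))^3)
        ((2*a/3) * (3 * s^2 * (1/(2*s) * (-b)))) t := by
      have := (hsq.fun_pow 3).const_mul (2*a/3)
      refine this.congr_deriv ?_
      norm_num [hsdef]
    have h5 : HasDerivAt (fun t : ℝ => (1/5) * (Real.sqrt (a - b*t))^5)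
        ((1/5) * (5 * s^4 * (1/(2*s) * (-b)))) t := by
      have := (hsq.fun_pow 5).const_mul (1/5 : ℝ)
      refine this.congr_deriv ?_
      norm_num [hsdef]
    have hD := ((h1.sub h3).add h5).const_mul (-(2/b^3))
    refine hD.congr_deriv ?_
    symm
    have hs2 : s^2 = a - b*t := Real.sq_sqrt hu.le
    have hkey : b^2 * (1 + t^2) = (b^2+a^2) - 2*a*s^2 + (s^2)^2 := by rw [hs2]; ring
    field_simp
    linear_combination hkey
  have hint : IntervalIntegrable (fun t => (1 + t^2) / Real.sqrt (a - b*t)) volume (-1) 1 := by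
    have h1 : IntervalIntegrable (fun t : ℝ => t ^ (-(1/2) : ℝ)) volume 0 2 :=
      intervalIntegral.intervalIntegrable_rpow' (by norm_num)
    have h2 : IntervalIntegrable (fun t : ℝ => (1 - t) ^ (-(1/2) : ℝ)) volume (-1) 1 := by
      have := h1.comp_sub_left 1
      norm_num at this; exact this.symm
    have h3 : IntervalIntegrable
        (fun t : ℝ => (1+t^2) * ((Real.sqrt b)⁻¹ * (1 - t) ^ (-(1/2) : ℝ))) volume (-1) 1 :=
      (h2.const_mul _).continuousOn_mul (by fun_prop)
    apply h3.mono_fun'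
    · have hm : Measurable fun t : ℝ => (1 + t^2) / Real.sqrt (a - b*t) := by
        have m1 : Measurable fun t : ℝ => 1 + t^2 := by fun_prop
        have m2 : Measurable fun t : ℝ => Real.sqrt (a - b*t) :=
          (Real.continuous_sqrt.comp (by fun_prop)).measurable
        exact m1.div m2
      exact hm.aestronglyMeasurable
    · have h4 : ∀ᵐ (t : ℝ), t ≠ 1 := by
        rw [MeasureTheory.ae_iff]
        convert Real.volume_singleton (a := (1:ℝ)) using 2
        ext t; simp
      filter_upwards [ae_restrict_mem measurableSet_uIoc, ae_restrict_of_ae h4] with t htm htne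
      have ht1 : t < 1 := lt_of_le_of_ne (by simpa [Set.uIoc_of_le (by norm_num : (-1:ℝ) ≤ 1)] using htm.2) htne
      have h1t : 0 < 1 - t := by linarith
      have hu : 0 < a - b*t := hupos t ht1
      have hbl : b * (1-t) ≤ a - b*t := by nlinarith
      have hsl : Real.sqrt b * Real.sqrt (1-t) ≤ Real.sqrt (a - b*t) := by
        rw [← Real.sqrt_mul hb0.le]
        exact Real.sqrt_le_sqrt hbl
      have hrw : (1 - t) ^ (-(1/2) : ℝ) = (Real.sqrt (1-t))⁻¹ := by
        rw [Real.rpow_neg h1t.le, Real.sqrt_eq_rpow]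
      rw [hrw, Real.norm_eq_abs, abs_of_nonneg (by positivity)]
      rw [div_eq_mul_inv, ← mul_inv]
      gcongr
  have := intervalIntegral.integral_eq_sub_of_hasDeriv_right_of_le (by norm_num) hcont
    (fun t ht => (hderiv t ht).hasDerivWithinAt) hint
  rw [this]
  have e1 : a - b*1 = (x - x')^2 := by rw [ha, hb]; ring
  have e2 : a - b*(-1) = (x + x')^2 := by rw [ha, hb]; ring
  have s1 : Real.sqrt (a - b*1) = x - x' := by rw [e1, Real.sqrt_sq (by linarith)]
  have s2 : Real.sqrt (a - b*(-1)) = x + x' := by rw [e2, Real.sqrt_sq (by linarith)]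
  rw [hF]
  simp only [s1, s2]
  rw [ha, hb]
  field_simp
  ring

theorem stmt0 (x x' : ℝ) (hx : 0 < x) (hx' : 0 < x') :
    (∫ t in (-1:ℝ)..1, (1 + t^2) / Real.sqrt (x^2 + x'^2 - 2*x*x'*t))
      = 4 * (10 * (max x x')^2 + (min x x')^2) / (15 * (max x x')^3) := by
  rcases le_total x' x with h | h
  · rw [max_eq_left h, min_eq_right h]
    exact key x x' hx' h
  · rw [max_eq_right h, min_eq_left h]
    have := key x' x hx h
    simpa only [show ∀ t : ℝ, x'^2 + x^2 - 2*x'*x*t = x^2 + x'^2 - 2*x*x'*t from fun t => by ring]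
      using this
end

section
/- Let θ ∈ (0,1), δ* > 0, ρ* > 0 and define γ₁(x) = (2x + ρ*²x² − ρ* x^{3/2} √(ρ*²x+8)) / (2(1−ρ*²x)) for x ∈ [0,δ*] and γ₁(x) = θx for x > δ*, with ρ* chosen so that γ₁ is continuous. Then the function z(x) = x − γ₁(x) is continuous and strictly increasing on [0,∞) with z(0)=0. -/
open Real Set

lemma three_halves (x : ℝ) (hx : 0 ≤ x) : x ^ ((3:ℝ)/2) = x * Real.sqrt x := by
  rcases eq_or_lt_of_le hx with h | h
  · simp [← h, Real.zero_rpow]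
  · rw [Real.sqrt_eq_rpow, show (3:ℝ)/2 = 1 + 1/2 by norm_num, Real.rpow_add h,
      Real.rpow_one]

lemma keyId (ρ x : ℝ) (hx : 0 ≤ x) (h1 : ρ^2 * x < 1) (hρ : 0 < ρ) :
    x - (2*x + ρ^2*x^2 - ρ * x ^ ((3:ℝ)/2) * Real.sqrt (ρ^2*x + 8)) / (2*(1 - ρ^2*x))
      = 4*ρ*(x*Real.sqrt x)/(Real.sqrt (ρ^2*x+8) + 3*ρ*Real.sqrt x) := by
  have hs : Real.sqrt x ^ 2 = x := Real.sq_sqrt hx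
  have ht : Real.sqrt (ρ^2*x+8) ^ 2 = ρ^2*x+8 := Real.sq_sqrt (by positivity)
  set s := Real.sqrt x with hsdef
  set t := Real.sqrt (ρ^2*x+8) with htdef
  have hs0 : 0 ≤ s := Real.sqrt_nonneg _
  have ht0 : 0 < t := Real.sqrt_pos.mpr (by positivity)
  have hd1 : (2:ℝ)*(1 - ρ^2*x) ≠ 0 := by nlinarith
  have hd2 : t + 3*ρ*s ≠ 0 := by positivity
  rw [three_halves x hx, ← hsdef]
  rw [eq_div_iff hd2, sub_div' hd1, div_mul_eq_mul_div, div_eq_iff hd1]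
  linear_combination (x*ρ*s)*ht + (3*x*ρ^2*t)*hs

lemma monoF (ρ : ℝ) (hρ : 0 < ρ) {a b : ℝ} (ha : 0 ≤ a) (hab : a < b) :
    4*ρ*(a*Real.sqrt a)/(Real.sqrt (ρ^2*a+8) + 3*ρ*Real.sqrt a)
      < 4*ρ*(b*Real.sqrt b)/(Real.sqrt (ρ^2*b+8) + 3*ρ*Real.sqrt b) := by
  have hb : 0 < b := lt_of_le_of_lt ha hab
  have hsa : Real.sqrt a ^ 2 = a := Real.sq_sqrt ha
  have hsb : Real.sqrt b ^ 2 = b := Real.sq_sqrt hb.le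
  have hta : Real.sqrt (ρ^2*a+8) ^ 2 = ρ^2*a+8 := Real.sq_sqrt (by positivity)
  have htb : Real.sqrt (ρ^2*b+8) ^ 2 = ρ^2*b+8 := Real.sq_sqrt (by positivity)
  set sa := Real.sqrt a; set sb := Real.sqrt b
  set ta := Real.sqrt (ρ^2*a+8); set tb := Real.sqrt (ρ^2*b+8)
  have hsa0 : 0 ≤ sa := Real.sqrt_nonneg _
  have hsb0 : 0 < sb := Real.sqrt_pos.mpr hb
  have hta0 : 0 < ta := Real.sqrt_pos.mpr (by positivity)
  have htb0 : 0 < tb := Real.sqrt_pos.mpr (by positivity)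
  have hss : sa < sb := Real.sqrt_lt_sqrt ha hab
  have hda : 0 < ta + 3*ρ*sa := by positivity
  have hdb : 0 < tb + 3*ρ*sb := by positivity
  rw [div_lt_div_iff₀ hda hdb]
  have hkey : sa^3 * tb ≤ sb^3 * ta := by
    have e1 : sa^4 ≤ sb^4 := pow_le_pow_left₀ hsa0 hss.le 4
    have e2 : sa^6 ≤ sb^6 := pow_le_pow_left₀ hsa0 hss.le 6
    have key6 : sa^6 * (ρ^2*sb^2+8) ≤ sb^6 * (ρ^2*sa^2+8) := by
      nlinarith [mul_le_mul_of_nonneg_left e1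
        (by positivity : (0:ℝ) ≤ ρ^2*(sa*sb)^2), e2]
    have h2 : (sa^3 * tb)^2 ≤ (sb^3 * ta)^2 := by
      calc (sa^3 * tb)^2 = sa^6 * (ρ^2*sb^2+8) := by
            rw [mul_pow, htb, hsb]; ring
        _ ≤ sb^6 * (ρ^2*sa^2+8) := key6
        _ = (sb^3 * ta)^2 := by rw [mul_pow, hta, hsa]; ring
    have h3 : 0 ≤ sa^3 * tb := by positivity
    have h4 : 0 ≤ sb^3 * ta := by positivity
    nlinarith [h2, h3, h4]
  have inner : sa^3*tb + 3*ρ*(sa^3*sb) < sb^3*ta + 3*ρ*(sb^3*sa) := by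
    rcases eq_or_lt_of_le hsa0 with h0 | h0
    · rw [← h0]
      have : (0:ℝ) < sb^3*ta + 3*ρ*(sb^3*0) := by simp; positivity
      simpa using this
    · have hsq : sa^2 < sb^2 := by nlinarith
      have l1 : sa^2*(sa*sb) < sb^2*(sa*sb) :=
        mul_lt_mul_of_pos_right hsq (mul_pos h0 hsb0)
      have l2 : 3*ρ*(sa^3*sb) < 3*ρ*(sb^3*sa) := by
        have h3ρ : (0:ℝ) < 3*ρ := by linarith
        calc 3*ρ*(sa^3*sb) = 3*ρ*(sa^2*(sa*sb)) := by ring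
          _ < 3*ρ*(sb^2*(sa*sb)) := by exact mul_lt_mul_of_pos_left l1 h3ρ
          _ = 3*ρ*(sb^3*sa) := by ring
      linarith
  calc 4*ρ*(a*sa)*(tb+3*ρ*sb) = 4*ρ*(sa^3*tb + 3*ρ*(sa^3*sb)) := by
        rw [← hsa]; ring
    _ < 4*ρ*(sb^3*ta + 3*ρ*(sb^3*sa)) := by
        exact mul_lt_mul_of_pos_left inner (by positivity)
    _ = 4*ρ*(b*sb)*(ta+3*ρ*sa) := by rw [← hsb]; ring

theorem stmt1 (θ δ ρ : ℝ) (hθ : θ ∈ Set.Ioo (0:ℝ) 1) (hδ : 0 < δ) (hρ : 0 < ρ)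
    (hpos : ∀ x ∈ Set.Icc (0:ℝ) δ, ρ^2 * x < 1)
    (γ₁ : ℝ → ℝ)
    (hdef : ∀ x ∈ Set.Icc (0:ℝ) δ,
      γ₁ x = (2*x + ρ^2*x^2 - ρ * x ^ ((3:ℝ)/2) * Real.sqrt (ρ^2*x + 8)) / (2*(1 - ρ^2*x)))
    (hdef2 : ∀ x, δ < x → γ₁ x = θ * x)
    (hmatch : (2*δ + ρ^2*δ^2 - ρ * δ ^ ((3:ℝ)/2) * Real.sqrt (ρ^2*δ + 8)) / (2*(1 - ρ^2*δ))
      = θ * δ) :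
    ContinuousOn (fun x => x - γ₁ x) (Set.Ici 0) ∧
    StrictMonoOn (fun x => x - γ₁ x) (Set.Ici 0) ∧
    (0:ℝ) - γ₁ 0 = 0 := by
  obtain ⟨hθ0, hθ1⟩ := hθ
  set F : ℝ → ℝ := fun x => 4*ρ*(x*Real.sqrt x)/(Real.sqrt (ρ^2*x+8) + 3*ρ*Real.sqrt x)
    with hF
  -- z = F on [0, δ]
  have key : ∀ x ∈ Set.Icc (0:ℝ) δ, x - γ₁ x = F x := by
    intro x hx
    rw [hdef x hx]
    exact keyId ρ x hx.1 (hpos x hx) hρ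
  -- z = (1-θ)x on [δ, ∞)
  have key2 : ∀ x ∈ Set.Ici δ, x - γ₁ x = (1-θ)*x := by
    intro x hx
    rcases eq_or_lt_of_le (mem_Ici.mp hx) with h | h
    · rw [← h, hdef δ ⟨hδ.le, le_refl δ⟩, hmatch]; ring
    · rw [hdef2 x h]; ring
  have hFδ : F δ = (1-θ)*δ := by
    rw [← key δ ⟨hδ.le, le_refl δ⟩, key2 δ (mem_Ici.mpr (le_refl δ))]
  have hF0 : F 0 = 0 := by simp [hF]
  refine ⟨?_, ?_, ?_⟩
  · -- continuity
    have heq : Set.EqOn (fun x => x - γ₁ x)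
        (fun x => if x ≤ δ then F x else (1-θ)*x) (Set.Ici 0) := by
      intro x hx
      by_cases h : x ≤ δ
      · simp only [h, if_true]; exact key x ⟨hx, h⟩
      · simp only [h, if_false]
        exact key2 x (mem_Ici.mpr (le_of_not_ge h)) 
    refine ContinuousOn.congr ?_ heq
    apply ContinuousOn.if
    · intro a ha
      have : a = δ := by
        have h2 := ha.2
        rw [show {a : ℝ | a ≤ δ} = Set.Iic δ from rfl, frontier_Iic] at h2
        simpa using h2
      simp [this, hFδ]
    · -- ContinuousOn F (Ici 0 ∩ closure {x | x ≤ δ})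
      have hsub : Set.Ici (0:ℝ) ∩ closure {x : ℝ | x ≤ δ} ⊆ Set.Ici 0 :=
        Set.inter_subset_left
      apply ContinuousOn.mono (s := Set.Ici (0:ℝ)) ?_ hsub
      apply ContinuousOn.div
      · exact (continuous_const.mul (continuous_id.mul Real.continuous_sqrt)).continuousOn
      · exact ((Real.continuous_sqrt.comp (by continuity)).add
          (continuous_const.mul Real.continuous_sqrt)).continuousOn
      · intro x hx
        have hx0 : (0:ℝ) ≤ x := hx
        have h1 : 0 < Real.sqrt (ρ^2*x+8) := Real.sqrt_pos.mpr (by positivity)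
        have h2 : 0 ≤ 3*ρ*Real.sqrt x := by positivity
        positivity
    · exact ((continuous_const.mul continuous_id).continuousOn).mono
        Set.inter_subset_right |>.congr (fun x hx => rfl)
  · -- strict monotonicity
    intro a ha b hb hab
    simp only
    by_cases hbδ : b ≤ δ
    · have haδ : a ≤ δ := le_of_lt (lt_of_lt_of_le hab hbδ)
      rw [key a ⟨ha, haδ⟩, key b ⟨hb, hbδ⟩]
      exact monoF ρ hρ ha hab
    · push_neg at hbδ
      rw [key2 b (mem_Ici.mpr hbδ.le)]
      by_cases haδ : a ≤ δ
      · rw [key a ⟨ha, haδ⟩]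
        calc F a ≤ F δ := by
              rcases eq_or_lt_of_le haδ with h | h
              · rw [h]
              · exact (monoF ρ hρ ha h).le
          _ = (1-θ)*δ := hFδ
          _ < (1-θ)*b := by
              apply mul_lt_mul_of_pos_left hbδ
              linarith
      · push_neg at haδ
        rw [key2 a (mem_Ici.mpr haδ.le)]
        apply mul_lt_mul_of_pos_left hab
        linarith
  · have := key 0 ⟨le_refl 0, hδ.le⟩
    rw [this, hF0]
end

section
/- If φ ∈ C¹([0,∞)) with φ'(0) = 0 and B is symmetric, continuous on [0,∞)²∖{(0,0)}, supported in Γ and bounded by C* e^{(x+y)/2}/(x+y) on Γ, then the function k_φ(x,y) = B(x,y)/(xy)·(e^{−x}−e^{−y})(φ(x)−φ(y)) extends continuously to [0,∞)² with k_φ(0,0)=0. -/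
open Real Set Topology Filter

lemma expA (a b : ℝ) (ha : 0 ≤ a) (hb : 0 ≤ b) :
    |Real.exp (-a) - Real.exp (-b)| ≤ |a - b| := by
  wlog h : a ≤ b generalizing a b
  · rw [abs_sub_comm, abs_sub_comm a b]; exact this b a hb ha (le_of_not_ge h)
  have h1 : Real.exp (-b) ≤ Real.exp (-a) := Real.exp_le_exp.2 (by linarith)
  have h2 : Real.exp (-a) ≤ 1 := Real.exp_le_one_iff.2 (by linarith)
  have h3 : (a - b) + 1 ≤ Real.exp (a - b) := Real.add_one_le_exp _
  have h4 : Real.exp (-b) = Real.exp (-a) * Real.exp (a - b) := by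
    rw [← Real.exp_add]; ring_nf
  rw [abs_of_nonneg (by linarith), abs_of_nonpos (by linarith)]
  nlinarith [Real.exp_pos (-a), Real.exp_pos (a-b)]

def Gamma (θ δ ρ : ℝ) : Set (ℝ × ℝ) :=
  {p : ℝ × ℝ |
    (p.1 ∈ Set.Ici (0:ℝ) ∧ p.2 ∈ Set.Ici (0:ℝ) ∧
      ¬ (p.1 ∈ Set.Icc (0:ℝ) δ ∧ p.2 ∈ Set.Icc (0:ℝ) δ) ∧
      θ * p.1 ≤ p.2 ∧ p.2 ≤ θ⁻¹ * p.1) ∨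
    (p.1 ∈ Set.Icc (0:ℝ) δ ∧ p.2 ∈ Set.Icc (0:ℝ) δ ∧
      |p.1 - p.2| ≤ ρ * Real.sqrt (p.1 * p.2 * (p.1 + p.2)))}

lemma gammaSymm {θ δ ρ : ℝ} (hθ : 0 < θ) {x y : ℝ} (h : (x, y) ∈ Gamma θ δ ρ) :
    (y, x) ∈ Gamma θ δ ρ := by
  have hin : θ * θ⁻¹ = 1 := mul_inv_cancel₀ hθ.ne'
  simp only [_root_.Gamma, Set.mem_setOf_eq, Set.mem_Ici, Set.mem_Icc] at h ⊢
  rcases h with ⟨hx, hy, hne, h1, h2⟩ | ⟨hx, hy, h3⟩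
  · exact Or.inl ⟨hy, hx, fun ⟨a, b⟩ => hne ⟨b, a⟩, by nlinarith, by nlinarith⟩
  · exact Or.inr ⟨hy, hx, by rwa [abs_sub_comm, mul_comm y x, add_comm y x]⟩

lemma notGamma {θ δ ρ : ℝ} (hθ : 0 < θ) (hδ : 0 < δ) (hρ : 0 < ρ) {y₀ : ℝ} (hy₀ : 0 < y₀) :
    ∃ ε > 0, ∀ x y : ℝ, 0 ≤ x → x < ε → |y - y₀| < ε → (x, y) ∉ Gamma θ δ ρ := by
  refine ⟨min (θ * y₀ / 2) (min (y₀ / 4) (y₀ ^ 2 / (64 * ρ ^ 2 * δ ^ 2))),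
    lt_min (by positivity) (lt_min (by positivity) (by positivity)), ?_⟩
  intro x y hx hxe hye hmem
  have hε1 : x < θ * y₀ / 2 := lt_of_lt_of_le hxe (min_le_left _ _)
  have hε2 : x < y₀ / 4 := lt_of_lt_of_le hxe ((min_le_right _ _).trans (min_le_left _ _))
  have hε3 : x < y₀ ^ 2 / (64 * ρ ^ 2 * δ ^ 2) :=
    lt_of_lt_of_le hxe ((min_le_right _ _).trans (min_le_right _ _))
  have hx3 : 64 * ρ ^ 2 * δ ^ 2 * x < y₀ ^ 2 := by
    rw [lt_div_iff₀ (by positivity)] at hε3; linarith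
  have hy4 : |y - y₀| < y₀ / 4 :=
    hye.trans_le ((min_le_right _ _).trans (min_le_left _ _))
  have hylb : y₀ - y₀ / 4 < y := by linarith [(abs_lt.1 hy4).1]
  simp only [_root_.Gamma, Set.mem_setOf_eq, Set.mem_Ici, Set.mem_Icc] at hmem
  rcases hmem with ⟨_, _, _, h1, h2⟩ | ⟨hxI, hyI, h3⟩
  · have hθy : θ * y ≤ x := by nlinarith [mul_inv_cancel₀ hθ.ne']
    nlinarith
  · have hnn : (0:ℝ) ≤ x * y * (x + y) := by
      have : (0:ℝ) ≤ y := hyI.1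
      positivity
    have hs : Real.sqrt (x * y * (x + y)) ^ 2 ≤ x * δ * (2 * δ) := by
      rw [Real.sq_sqrt hnn]
      have h1 : x * y ≤ x * δ := mul_le_mul_of_nonneg_left hyI.2 hx
      have h2 : x + y ≤ 2 * δ := by linarith [hxI.2, hyI.2]
      exact mul_le_mul h1 h2 (by linarith [hyI.1]) (mul_nonneg hx hδ.le)
    have hsq := Real.sqrt_nonneg (x * y * (x + y))
    have habs : y₀ / 2 < |x - y| := by
      rw [abs_sub_comm, abs_of_nonneg (by linarith : (0:ℝ) ≤ y - x)]
      linarith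
    have hkey : y₀ / 2 < ρ * Real.sqrt (x * y * (x + y)) := habs.trans_le h3
    nlinarith [hkey, hs, hx3, hsq, hρ, mul_pos hy₀ hy₀]

set_option maxHeartbeats 2000000 in
theorem stmt6 (θ δ ρ Cstar : ℝ) (hθ : θ ∈ Set.Ioo (0:ℝ) 1) (hδ : 0 < δ) (hρ : 0 < ρ)
    (hC : 0 < Cstar)
    (B : ℝ → ℝ → ℝ) (hBnn : ∀ x y, 0 ≤ B x y) (hBsymm : ∀ x y, B x y = B y x)
    (hBcont : ContinuousOn (fun p : ℝ × ℝ => B p.1 p.2)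
      ((Set.Ici (0:ℝ) ×ˢ Set.Ici (0:ℝ)) \ {((0:ℝ), (0:ℝ))}))
    (hBsupp : ∀ x y, B x y ≠ 0 → (x, y) ∈ Gamma θ δ ρ)
    (hBbound : ∀ x y, (x, y) ∈ Gamma θ δ ρ → B x y ≤ Cstar * Real.exp ((x + y)/2) / (x + y))
    (φ : ℝ → ℝ) (hφ : ContDiff ℝ 1 φ) (hφ0 : deriv φ 0 = 0) :
    ContinuousOn
      (fun p : ℝ × ℝ =>
        B p.1 p.2 / (p.1 * p.2) * (Real.exp (-p.1) - Real.exp (-p.2)) * (φ p.1 - φ p.2))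
      (Set.Ici (0:ℝ) ×ˢ Set.Ici (0:ℝ)) ∧
    B 0 0 / ((0:ℝ) * 0) * (Real.exp (-(0:ℝ)) - Real.exp (-(0:ℝ))) * (φ 0 - φ 0) = 0 := by
  set S : Set (ℝ × ℝ) := Set.Ici (0:ℝ) ×ˢ Set.Ici (0:ℝ) with hS
  set f : ℝ × ℝ → ℝ := fun p =>
    B p.1 p.2 / (p.1 * p.2) * (Real.exp (-p.1) - Real.exp (-p.2)) * (φ p.1 - φ p.2) with hf
  have hzero : ∀ q : ℝ × ℝ, (q.1, q.2) ∉ Gamma θ δ ρ → f q = 0 := by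
    intro q h
    have hB0 : B q.1 q.2 = 0 := by
      by_contra hB; exact h (hBsupp _ _ hB)
    simp [hf, hB0]
  refine ⟨?_, by norm_num⟩
  intro p hp
  have hp1 : (0:ℝ) ≤ p.1 := hp.1
  have hp2 : (0:ℝ) ≤ p.2 := hp.2
  rcases hp1.eq_or_lt with h1 | h1
  · rcases hp2.eq_or_lt with h2 | h2
    · -- p = (0,0)
      have hp0 : p = ((0:ℝ), (0:ℝ)) := Prod.ext h1.symm h2.symm
      rw [Metric.continuousWithinAt_iff]
      intro ε hε
      obtain ⟨ε₁, hε₁, hε₁eq⟩ : ∃ e : ℝ, 0 < e ∧ e * (Cstar * ρ ^ 2 * 3 + 1) = ε :=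
        ⟨ε / (Cstar * ρ ^ 2 * 3 + 1), by positivity, by field_simp⟩
      have hcd : Continuous (deriv φ) := hφ.continuous_deriv le_rfl
      obtain ⟨r, hr, hder⟩ := Metric.continuousAt_iff.1 hcd.continuousAt ε₁ hε₁
      set d := min δ (min r 2) / 2 with hd
      have hdpos : 0 < d := by positivity
      have hdδ : d ≤ δ := by
        have := min_le_left δ (min r 2); simp only [hd]; linarith
      have hdr : d < r := by
        have h := (min_le_right δ (min r 2)).trans (min_le_left r 2)
        simp only [hd]; linarith
      have hd1 : d ≤ 1 := by
        have h := (min_le_right δ (min r 2)).trans (min_le_right r 2)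
        simp only [hd]; linarith
      refine ⟨d, hdpos, ?_⟩
      intro q hqS hdist
      obtain ⟨x, y⟩ := q
      have hx0 : (0:ℝ) ≤ x := hqS.1
      have hy0 : (0:ℝ) ≤ y := hqS.2
      rw [hp0] at hdist
      rw [Prod.dist_eq, max_lt_iff] at hdist
      have hxd : x < d := by
        have := hdist.1; rwa [Real.dist_eq, sub_zero, abs_of_nonneg hx0] at this
      have hyd : y < d := by
        have := hdist.2; rwa [Real.dist_eq, sub_zero, abs_of_nonneg hy0] at this
      have hfp : f p = 0 := by simp [hf, hp0]
      rw [hfp, Real.dist_eq, sub_zero]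
      by_cases hxy : x * y = 0
      · have : f (x, y) = 0 := by simp [hf, hxy]
        simpa [this] using hε
      by_cases hB0 : B x y = 0
      · have : f (x, y) = 0 := by simp [hf, hB0]
        simpa [this] using hε
      have hxpos : 0 < x := lt_of_le_of_ne hx0 (by rintro rfl; exact hxy (by ring))
      have hypos : 0 < y := lt_of_le_of_ne hy0 (by rintro rfl; exact hxy (by ring))
      have hΓ : (x, y) ∈ Gamma θ δ ρ := hBsupp x y hB0
      have habs : |x - y| ≤ ρ * Real.sqrt (x * y * (x + y)) := by
        simp only [_root_.Gamma, Set.mem_setOf_eq, Set.mem_Ici, Set.mem_Icc] at hΓ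
        rcases hΓ with ⟨_, _, hne, _⟩ | ⟨_, _, h3⟩
        · exact absurd ⟨⟨hx0, by linarith⟩, ⟨hy0, by linarith⟩⟩ hne
        · exact h3
      have hBub : B x y ≤ Cstar * Real.exp ((x + y) / 2) / (x + y) := hBbound x y hΓ
      have hspos : 0 < x + y := by linarith
      have hE3 : Real.exp ((x + y) / 2) ≤ 3 := by
        have h1 : Real.exp ((x + y) / 2) ≤ Real.exp 1 :=
          Real.exp_le_exp.2 (by linarith)
        have := Real.exp_one_lt_d9
        linarith
      -- derivative bound on Icc 0 d
      have hderb : ∀ t ∈ Set.Icc (0:ℝ) d, ‖deriv φ t‖ ≤ ε₁ := by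
        intro t ht
        have : dist t 0 < r := by
          rw [Real.dist_eq, sub_zero, abs_of_nonneg ht.1]; linarith [ht.2]
        have := hder this
        rw [hφ0, dist_zero_right] at this
        exact this.le
      have hΔφ : |φ x - φ y| ≤ ε₁ * |x - y| := by
        have hconv : Convex ℝ (Set.Icc (0:ℝ) d) := convex_Icc _ _
        have hdiff : ∀ t ∈ Set.Icc (0:ℝ) d, DifferentiableAt ℝ φ t := fun t _ =>
          (hφ.differentiable one_ne_zero) t
        have := hconv.norm_image_sub_le_of_norm_deriv_le hdiff hderb
          (⟨hy0, hyd.le⟩ : y ∈ Set.Icc (0:ℝ) d) (⟨hx0, hxd.le⟩ : x ∈ Set.Icc (0:ℝ) d)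
        simpa [Real.norm_eq_abs] using this
      have hΔe : |Real.exp (-x) - Real.exp (-y)| ≤ |x - y| := expA x y hx0 hy0
      have hxypos : 0 < x * y := mul_pos hxpos hypos
      have hsqle : |x - y| ^ 2 ≤ ρ ^ 2 * (x * y * (x + y)) := by
        have h1 : (0:ℝ) ≤ x * y * (x + y) := by positivity
        nlinarith [Real.sq_sqrt h1, Real.sqrt_nonneg (x * y * (x + y)),
          abs_nonneg (x - y), hρ.le, habs]
      have hBdivnn : (0:ℝ) ≤ B x y / (x * y) := div_nonneg (hBnn x y) hxypos.le
      have hfabs : |f (x, y)| =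
          B x y / (x * y) * |Real.exp (-x) - Real.exp (-y)| * |φ x - φ y| := by
        simp only [hf]
        rw [abs_mul, abs_mul, abs_of_nonneg hBdivnn]
      have hEpos : (0:ℝ) < Real.exp ((x + y) / 2) := Real.exp_pos _
      calc |f (x, y)|
          = B x y / (x * y) * |Real.exp (-x) - Real.exp (-y)| * |φ x - φ y| := hfabs
        _ ≤ B x y / (x * y) * |x - y| * (ε₁ * |x - y|) :=
            mul_le_mul (mul_le_mul_of_nonneg_left hΔe hBdivnn) hΔφ (abs_nonneg _)
              (mul_nonneg hBdivnn (abs_nonneg _))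
        _ = B x y * |x - y| ^ 2 * ε₁ / (x * y) := by
            rw [div_mul_eq_mul_div, div_mul_eq_mul_div]; congr 1; ring
        _ ≤ Cstar * Real.exp ((x + y) / 2) / (x + y) * (ρ ^ 2 * (x * y * (x + y))) * ε₁
              / (x * y) := by
            exact div_le_div_of_nonneg_right (mul_le_mul_of_nonneg_right
              (mul_le_mul hBub hsqle (sq_nonneg _) (by positivity)) hε₁.le) hxypos.le
        _ = Cstar * Real.exp ((x + y) / 2) * ρ ^ 2 * ε₁ := by
            rw [div_mul_eq_mul_div, div_mul_eq_mul_div, div_div,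
              div_eq_iff (by positivity : ((x + y) * (x * y)) ≠ 0)]
            ring
        _ ≤ Cstar * 3 * ρ ^ 2 * ε₁ := by
            nlinarith [hE3, mul_nonneg (mul_nonneg hC.le (sq_nonneg ρ)) hε₁.le, hEpos]
        _ < ε := by nlinarith [hε₁, hε₁eq]
    · -- p.1 = 0, p.2 > 0 : locally zero
      obtain ⟨ε, hε, hΓ⟩ := notGamma hθ.1 hδ hρ h2
      have hfp : f p = 0 := by simp [hf, ← h1]
      apply ContinuousWithinAt.congr_of_eventuallyEq
        (continuousWithinAt_const (b := (0:ℝ))) ?_ hfp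
      have hop1 : {q : ℝ × ℝ | q.1 < ε} ∈ 𝓝 p :=
        (isOpen_lt continuous_fst continuous_const).mem_nhds (by simp [← h1, hε])
      have hop2 : {q : ℝ × ℝ | |q.2 - p.2| < ε} ∈ 𝓝 p :=
        (isOpen_lt ((continuous_snd.sub continuous_const).abs) continuous_const).mem_nhds
          (by simp [hε])
      filter_upwards [nhdsWithin_le_nhds hop1, nhdsWithin_le_nhds hop2,
        self_mem_nhdsWithin] with q hq1 hq2 hqS
      exact hzero q (hΓ q.1 q.2 hqS.1 hq1 hq2)
  · -- p.1 > 0, p.2 = 0 : locally zero (symmetric)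
    rcases hp2.eq_or_lt with h2 | h2
    · obtain ⟨ε, hε, hΓ⟩ := notGamma hθ.1 hδ hρ h1
      have hfp : f p = 0 := by simp [hf, ← h2]
      apply ContinuousWithinAt.congr_of_eventuallyEq
        (continuousWithinAt_const (b := (0:ℝ))) ?_ hfp
      have hop1 : {q : ℝ × ℝ | q.2 < ε} ∈ 𝓝 p :=
        (isOpen_lt continuous_snd continuous_const).mem_nhds (by simp [← h2, hε])
      have hop2 : {q : ℝ × ℝ | |q.1 - p.1| < ε} ∈ 𝓝 p :=
        (isOpen_lt ((continuous_fst.sub continuous_const).abs) continuous_const).mem_nhds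
          (by simp [hε])
      filter_upwards [nhdsWithin_le_nhds hop1, nhdsWithin_le_nhds hop2,
        self_mem_nhdsWithin] with q hq1 hq2 hqS
      refine hzero q fun hmem => hΓ q.2 q.1 hqS.2 hq1 hq2 (gammaSymm hθ.1 hmem)
    · -- both positive : honest continuity
      have hne : p ≠ ((0:ℝ), (0:ℝ)) := by
        intro h; rw [h] at h1; exact lt_irrefl _ h1
      have hpd : p ∈ S \ {((0:ℝ), (0:ℝ))} := ⟨hp, hne⟩
      have hmem : S \ {((0:ℝ), (0:ℝ))} ∈ 𝓝[S] p := by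
        rw [Set.diff_eq]
        exact Filter.inter_mem self_mem_nhdsWithin
          (mem_nhdsWithin_of_mem_nhds (isOpen_compl_singleton.mem_nhds hne))
      have hB' : ContinuousWithinAt (fun q : ℝ × ℝ => B q.1 q.2) S p :=
        (hBcont p hpd).mono_of_mem_nhdsWithin hmem
      have hden : p.1 * p.2 ≠ 0 := (mul_pos h1 h2).ne'
      exact ((hB'.div ((continuous_fst.mul continuous_snd).continuousWithinAt) hden).mul
        (((Real.continuous_exp.comp continuous_fst.neg).sub
          (Real.continuous_exp.comp continuous_snd.neg)).continuousWithinAt)).mul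
        (((hφ.continuous.comp continuous_fst).sub
          (hφ.continuous.comp continuous_snd)).continuousWithinAt)
end

section
/- Consider the ODE system x' = R₁ x y, y' = −R₁ x y + R₂ y z, z' = −R₂ y z with R₁ > 0, R₂ > 0 and initial data x₀, y₀, z₀ > 0 with x₀ + y₀ + z₀ = 1. Then x(t) + y(t) + z(t) = 1 for all t ≥ 0, x is nondecreasing, z is nonincreasing, and if x₀ > R₂/(R₁ + R₂), then y(t) ≤ y₀ e^{Ct} with C = R₂ − x₀(R₁+R₂) < 0, so y(t) → 0 as t → ∞. -/
open Real Set Filter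

lemma my_mono_aux (f f' : ℝ → ℝ) (hf : ∀ t ≥ (0:ℝ), HasDerivAt f (f' t) t)
    (hf' : ∀ t ≥ (0:ℝ), 0 ≤ f' t) : MonotoneOn f (Set.Ici 0) := by
  apply monotoneOn_of_deriv_nonneg (convex_Ici 0)
  · exact fun t ht => (hf t ht).continuousAt.continuousWithinAt
  · intro t ht
    rw [interior_Ici] at ht
    exact (hf t ht.le).differentiableAt.differentiableWithinAt
  · intro t ht
    rw [interior_Ici] at ht
    rw [(hf t ht.le).deriv]
    exact hf' t ht.le

lemma my_anti_aux (f f' : ℝ → ℝ) (hf : ∀ t ≥ (0:ℝ), HasDerivAt f (f' t) t)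
    (hf' : ∀ t ≥ (0:ℝ), f' t ≤ 0) : AntitoneOn f (Set.Ici 0) := by
  apply antitoneOn_of_deriv_nonpos (convex_Ici 0)
  · exact fun t ht => (hf t ht).continuousAt.continuousWithinAt
  · intro t ht
    rw [interior_Ici] at ht
    exact (hf t ht.le).differentiableAt.differentiableWithinAt
  · intro t ht
    rw [interior_Ici] at ht
    rw [(hf t ht.le).deriv]
    exact hf' t ht.le

theorem stmt14 (R₁ R₂ x₀ y₀ z₀ : ℝ) (x y z : ℝ → ℝ)
    (hR1 : 0 < R₁) (hR2 : 0 < R₂)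
    (hx0 : 0 < x₀) (hy0 : 0 < y₀) (hz0 : 0 < z₀)
    (hsum : x₀ + y₀ + z₀ = 1)
    (hx : ∀ t ≥ (0:ℝ), HasDerivAt x (R₁ * x t * y t) t)
    (hy : ∀ t ≥ (0:ℝ), HasDerivAt y (-(R₁ * x t * y t) + R₂ * y t * z t) t)
    (hz : ∀ t ≥ (0:ℝ), HasDerivAt z (-(R₂ * y t * z t)) t)
    (hxi : x 0 = x₀) (hyi : y 0 = y₀) (hzi : z 0 = z₀)
    (hpos : ∀ t ≥ (0:ℝ), 0 < x t ∧ 0 < y t ∧ 0 < z t) :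
    (∀ t ≥ (0:ℝ), x t + y t + z t = 1) ∧
    MonotoneOn x (Set.Ici 0) ∧
    AntitoneOn z (Set.Ici 0) ∧
    (x₀ > R₂ / (R₁ + R₂) →
      (∀ t ≥ (0:ℝ), y t ≤ y₀ * Real.exp ((R₂ - x₀ * (R₁ + R₂)) * t)) ∧
      R₂ - x₀ * (R₁ + R₂) < 0 ∧
      Tendsto y atTop (nhds 0)) := by
  set C := R₂ - x₀ * (R₁ + R₂) with hCdef
  have hsderiv : ∀ t ≥ (0:ℝ), HasDerivAt (fun t => x t + y t + z t) 0 t := by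
    intro t ht
    have := ((hx t ht).add (hy t ht)).add (hz t ht)
    convert this using 1
    · rfl
    · rfl
    · rfl
    · ring
  have hsum1 : ∀ t ≥ (0:ℝ), x t + y t + z t = 1 := by
    have hm := my_mono_aux _ (fun _ => 0) hsderiv (fun _ _ => le_refl 0)
    have ha := my_anti_aux _ (fun _ => 0) hsderiv (fun _ _ => le_refl 0)
    intro t ht
    have h1 := hm (self_mem_Ici) ht ht
    have h2 := ha (self_mem_Ici) ht ht
    simp only [hxi, hyi, hzi] at h1 h2
    linarith
  have hxmono : MonotoneOn x (Set.Ici 0) :=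
    my_mono_aux x (fun t => R₁ * x t * y t) hx (fun t ht => by
      obtain ⟨h1, h2, h3⟩ := hpos t ht
      positivity)
  have hzanti : AntitoneOn z (Set.Ici 0) :=
    my_anti_aux z (fun t => -(R₂ * y t * z t)) hz (fun t ht => by
      obtain ⟨h1, h2, h3⟩ := hpos t ht
      have h4 : 0 < R₂ * y t * z t := by positivity
      linarith)
  refine ⟨hsum1, hxmono, hzanti, fun hxlarge => ?_⟩
  have hR12 : 0 < R₁ + R₂ := by linarith
  have hC : C < 0 := by
    rw [hCdef]
    rw [gt_iff_lt, div_lt_iff₀ hR12] at hxlarge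
    nlinarith
  have hbound : ∀ t ≥ (0:ℝ), y t ≤ y₀ * Real.exp (C * t) := by
    have hg : ∀ t ≥ (0:ℝ), HasDerivAt (fun t => y t * Real.exp (-(C * t)))
        ((-(R₁ * x t * y t) + R₂ * y t * z t) * Real.exp (-(C * t))
          + y t * (Real.exp (-(C * t)) * (-C))) t := by
      intro t ht
      have hexp : HasDerivAt (fun t : ℝ => Real.exp (-(C * t)))
          (Real.exp (-(C * t)) * (-C)) t := by
        have hinner : HasDerivAt (fun t : ℝ => -(C * t)) (-C) t := by
          exact ((hasDerivAt_id' t).const_mul C).neg.congr_deriv (by ring)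
        exact (Real.hasDerivAt_exp (-(C * t))).comp t hinner
      exact (hy t ht).mul hexp
    have hganti := my_anti_aux _ _ hg (fun t ht => by
      obtain ⟨hxp, hyp, hzp⟩ := hpos t ht
      have hxge : x₀ ≤ x t := by
        have := hxmono self_mem_Ici ht ht
        rwa [hxi] at this
      have hzle : z t ≤ 1 - x t - y t := by
        have := hsum1 t ht; linarith
      have key : -(R₁ * x t * y t) + R₂ * y t * z t ≤ C * y t := by
        have h1 : -(R₁ * x t) + R₂ * z t ≤ C := by
          rw [hCdef]; nlinarith
        calc -(R₁ * x t * y t) + R₂ * y t * z t = (-(R₁ * x t) + R₂ * z t) * y t := by ring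
          _ ≤ C * y t := mul_le_mul_of_nonneg_right h1 hyp.le
      have hep : (0:ℝ) < Real.exp (-(C * t)) := Real.exp_pos _
      nlinarith)
    intro t ht
    have h := hganti self_mem_Ici ht ht
    simp only [hyi, mul_comm, neg_zero, mul_zero, Real.exp_zero, mul_one] at h
    -- h : y t * exp (-(C*t)) ≤ y₀   (modulo simp normal form)
    have h' : y t * Real.exp (-(C * t)) ≤ y₀ := by
      have h0 := hganti self_mem_Ici ht ht
      simpa [hyi] using h0
    have hep : (0:ℝ) < Real.exp (C * t) := Real.exp_pos _
    have := mul_le_mul_of_nonneg_right h' hep.le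
    calc y t = y t * Real.exp (-(C * t)) * Real.exp (C * t) := by
          rw [mul_assoc, ← Real.exp_add]; simp
      _ ≤ y₀ * Real.exp (C * t) := this
  refine ⟨hbound, hC, ?_⟩
  have hlim : Tendsto (fun t => y₀ * Real.exp (C * t)) atTop (nhds 0) := by
    have h1 : Tendsto (fun t : ℝ => C * t) atTop atBot :=
      tendsto_id.const_mul_atTop_of_neg hC
    have h2 : Tendsto (fun t : ℝ => Real.exp (C * t)) atTop (nhds 0) :=
      Real.tendsto_exp_atBot.comp h1
    simpa using h2.const_mul y₀
  have hyge : ∀ᶠ t in atTop, 0 ≤ y t :=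
    (eventually_ge_atTop 0).mono (fun t ht => (hpos t ht).2.1.le)
  have hyle : ∀ᶠ t in atTop, y t ≤ y₀ * Real.exp (C * t) :=
    (eventually_ge_atTop 0).mono (fun t ht => hbound t ht)
  exact squeeze_zero' hyge hyle hlim
end

section
/- In the ODE system of the previous statement with x₀ > R₂/(R₁+R₂), the limit z_∞ = lim_{t→∞} z(t) exists and satisfies z_∞ ≥ z₀ exp(R₂ y₀ / C) > 0, where C = R₂ − x₀(R₁+R₂) < 0. -/
open Real Set Filter

theorem stmt15 (R₁ R₂ x₀ y₀ z₀ : ℝ) (x y z : ℝ → ℝ)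
    (hR1 : 0 < R₁) (hR2 : 0 < R₂)
    (hx0 : 0 < x₀) (hy0 : 0 < y₀) (hz0 : 0 < z₀)
    (hsum : x₀ + y₀ + z₀ = 1)
    (hx : ∀ t ≥ (0:ℝ), HasDerivAt x (R₁ * x t * y t) t)
    (hy : ∀ t ≥ (0:ℝ), HasDerivAt y (-(R₁ * x t * y t) + R₂ * y t * z t) t)
    (hz : ∀ t ≥ (0:ℝ), HasDerivAt z (-(R₂ * y t * z t)) t)
    (hxi : x 0 = x₀) (hyi : y 0 = y₀) (hzi : z 0 = z₀)
    (hpos : ∀ t ≥ (0:ℝ), 0 < x t ∧ 0 < y t ∧ 0 < z t)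
    (hbig : x₀ > R₂ / (R₁ + R₂)) :
    R₂ - x₀ * (R₁ + R₂) < 0 ∧
    ∃ zinf : ℝ, Tendsto z atTop (nhds zinf) ∧
      zinf ≥ z₀ * Real.exp (R₂ * y₀ / (R₂ - x₀ * (R₁ + R₂))) ∧ 0 < zinf := by
  have hR12 : 0 < R₁ + R₂ := by linarith
  have hC : R₂ - x₀ * (R₁ + R₂) < 0 := by
    have h := (div_lt_iff₀ hR12).mp hbig
    linarith
  set C : ℝ := R₂ - x₀ * (R₁ + R₂) with hCdef
  -- mass conservation
  have hs : ∀ t ≥ (0:ℝ), HasDerivAt (fun t => x t + y t + z t) 0 t := by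
    intro t ht
    have := ((hx t ht).add (hy t ht)).add (hz t ht)
    refine this.congr_deriv ?_
    ring
  have hmass : ∀ t ≥ (0:ℝ), x t + y t + z t = 1 := by
    have hscont : ContinuousOn (fun t => x t + y t + z t) (Ici 0) :=
      fun t ht => (hs t ht).continuousAt.continuousWithinAt
    have hsdiff : DifferentiableOn ℝ (fun t => x t + y t + z t) (interior (Ici (0:ℝ))) := by
      rw [interior_Ici]
      exact fun t ht => (hs t (le_of_lt ht)).differentiableAt.differentiableWithinAt
    have hsderiv : ∀ t ∈ interior (Ici (0:ℝ)), deriv (fun t => x t + y t + z t) t = 0 := by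
      rw [interior_Ici]
      exact fun t ht => (hs t (le_of_lt ht)).deriv
    intro t ht
    have h1 : (fun t => x t + y t + z t) t ≤ (fun t => x t + y t + z t) 0 :=
      antitoneOn_of_deriv_nonpos (convex_Ici 0) hscont hsdiff
        (fun u hu => le_of_eq (hsderiv u hu)) self_mem_Ici ht ht
    have h2 : (fun t => x t + y t + z t) 0 ≤ (fun t => x t + y t + z t) t :=
      monotoneOn_of_deriv_nonneg (convex_Ici 0) hscont hsdiff
        (fun u hu => ge_of_eq (hsderiv u hu)) self_mem_Ici ht ht
    simp only [hxi, hyi, hzi] at h1 h2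
    linarith
  -- x is increasing
  have hxmono : ∀ t ≥ (0:ℝ), x₀ ≤ x t := by
    intro t ht
    have h := monotoneOn_of_deriv_nonneg (convex_Ici 0)
      (fun u hu => (hx u hu).continuousAt.continuousWithinAt)
      (by rw [interior_Ici]
          exact fun u hu => (hx u (le_of_lt hu)).differentiableAt.differentiableWithinAt)
      (by rw [interior_Ici]
          intro u hu
          rw [(hx u (le_of_lt hu)).deriv]
          have hp := hpos u (le_of_lt hu)
          exact (mul_pos (mul_pos hR1 hp.1) hp.2.1).le)
      self_mem_Ici ht ht
    simpa [hxi] using h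
  -- y t ≤ y₀ exp (C t)
  have hybound : ∀ t ≥ (0:ℝ), y t ≤ y₀ * Real.exp (C * t) := by
    have hg : ∀ t ≥ (0:ℝ), HasDerivAt (fun t => y t * Real.exp (-(C * t)))
        (((-(R₁ * x t * y t) + R₂ * y t * z t) - C * y t) * Real.exp (-(C * t))) t := by
      intro t ht
      have h1 : HasDerivAt (fun t : ℝ => -(C * t)) (-C) t := by
        have h0 := ((hasDerivAt_id t).const_mul C).neg
        simp only [mul_one] at h0
        exact h0
      have h2 := h1.exp
      have := (hy t ht).mul h2
      refine this.congr_deriv ?_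
      ring
    have hanti : AntitoneOn (fun t => y t * Real.exp (-(C * t))) (Ici 0) := by
      apply antitoneOn_of_deriv_nonpos (convex_Ici 0)
        (fun u hu => (hg u hu).continuousAt.continuousWithinAt)
        (by rw [interior_Ici]
            exact fun u hu => (hg u (le_of_lt hu)).differentiableAt.differentiableWithinAt)
      rw [interior_Ici]
      intro u hu
      rw [(hg u (le_of_lt hu)).deriv]
      have hp := hpos u (le_of_lt hu)
      have hxl := hxmono u (le_of_lt hu)
      have hm := hmass u (le_of_lt hu)
      have hzu : z u ≤ 1 - x₀ := by linarith [hp.1, hp.2.1]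
      have hexp : (0:ℝ) < Real.exp (-(C * u)) := Real.exp_pos _
      have key : -(R₁ * x u * y u) + R₂ * y u * z u - C * y u ≤ 0 := by
        have h3 : R₁ * x₀ * y u ≤ R₁ * x u * y u :=
          mul_le_mul_of_nonneg_right (mul_le_mul_of_nonneg_left hxl hR1.le) hp.2.1.le
        have h4 : R₂ * y u * z u ≤ R₂ * y u * (1 - x₀) :=
          mul_le_mul_of_nonneg_left hzu (mul_pos hR2 hp.2.1).le
        have hCe : C = R₂ - x₀ * (R₁ + R₂) := hCdef
        nlinarith [hp.2.1]
      nlinarith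
    intro t ht
    have h0 := hanti self_mem_Ici ht ht
    simp only [hyi, mul_zero, neg_zero, Real.exp_zero, mul_one] at h0
    calc y t = y t * Real.exp (-(C * t)) * Real.exp (C * t) := by
            rw [mul_assoc, ← Real.exp_add]; simp
      _ ≤ y₀ * Real.exp (C * t) :=
            mul_le_mul_of_nonneg_right h0 (Real.exp_pos _).le
  -- lower bound for z
  have hm0 : 0 < z₀ * Real.exp (R₂ * y₀ / C) := by positivity
  have hzlow : ∀ t ≥ (0:ℝ), z₀ * Real.exp (R₂ * y₀ / C) ≤ z t := by
    have hφ : ∀ t : ℝ, HasDerivAt (fun t => R₂ * y₀ * (Real.exp (C * t) - 1) / C)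
        (R₂ * y₀ * Real.exp (C * t)) t := by
      intro t
      have h1 : HasDerivAt (fun t : ℝ => C * t) C t := by
        simpa using (hasDerivAt_id t).const_mul C
      have h2 := ((h1.exp.sub_const 1).const_mul (R₂ * y₀)).div_const C
      refine h2.congr_deriv ?_
      rw [div_eq_iff hC.ne]
      ring
    have hh : ∀ t ≥ (0:ℝ), HasDerivAt
        (fun t => z t * Real.exp (R₂ * y₀ * (Real.exp (C * t) - 1) / C))
        ((-(R₂ * y t * z t) + z t * (R₂ * y₀ * Real.exp (C * t))) *
          Real.exp (R₂ * y₀ * (Real.exp (C * t) - 1) / C)) t := by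
      intro t ht
      have h2 := (hφ t).exp
      have := (hz t ht).mul h2
      refine this.congr_deriv ?_
      ring
    have hmono : MonotoneOn (fun t => z t * Real.exp (R₂ * y₀ * (Real.exp (C * t) - 1) / C))
        (Ici 0) := by
      apply monotoneOn_of_deriv_nonneg (convex_Ici 0)
        (fun u hu => (hh u hu).continuousAt.continuousWithinAt)
        (by rw [interior_Ici]
            exact fun u hu => (hh u (le_of_lt hu)).differentiableAt.differentiableWithinAt)
      rw [interior_Ici]
      intro u hu
      rw [(hh u (le_of_lt hu)).deriv]
      have hp := hpos u (le_of_lt hu)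
      have hyb := hybound u (le_of_lt hu)
      have hexp : (0:ℝ) < Real.exp (R₂ * y₀ * (Real.exp (C * u) - 1) / C) := Real.exp_pos _
      have h5 : R₂ * z u * y u ≤ R₂ * z u * (y₀ * Real.exp (C * u)) :=
        mul_le_mul_of_nonneg_left hyb (mul_pos hR2 hp.2.2).le
      have key : 0 ≤ -(R₂ * y u * z u) + z u * (R₂ * y₀ * Real.exp (C * u)) := by
        nlinarith [h5]
      exact mul_nonneg key hexp.le
    intro t ht
    have h0 := hmono self_mem_Ici ht ht
    simp only [hzi, mul_zero, Real.exp_zero, sub_self, zero_div, mul_one] at h0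
    -- h0 : z₀ ≤ z t * exp (R₂ * y₀ * (exp (C*t) - 1) / C)
    have hE : Real.exp (R₂ * y₀ * (Real.exp (C * t) - 1) / C) ≤ Real.exp (-(R₂ * y₀ / C)) := by
      apply Real.exp_le_exp.mpr
      rw [div_le_iff_of_neg hC, show -(R₂ * y₀ / C) * C = -(R₂ * y₀) by field_simp [hC.ne]]
      nlinarith [mul_pos (mul_pos hR2 hy0) (Real.exp_pos (C * t))]
    have h1 : z₀ ≤ z t * Real.exp (-(R₂ * y₀ / C)) := by
      have hp := hpos t ht
      calc z₀ ≤ z t * Real.exp (R₂ * y₀ * (Real.exp (C * t) - 1) / C) := h0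
        _ ≤ z t * Real.exp (-(R₂ * y₀ / C)) :=
            mul_le_mul_of_nonneg_left hE hp.2.2.le
    calc z₀ * Real.exp (R₂ * y₀ / C)
        ≤ z t * Real.exp (-(R₂ * y₀ / C)) * Real.exp (R₂ * y₀ / C) :=
          mul_le_mul_of_nonneg_right h1 (Real.exp_pos _).le
      _ = z t := by rw [mul_assoc, ← Real.exp_add]; simp
  -- z is antitone on Ici 0
  have hzanti : AntitoneOn z (Ici 0) := by
    apply antitoneOn_of_deriv_nonpos (convex_Ici 0)
      (fun u hu => (hz u hu).continuousAt.continuousWithinAt)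
      (by rw [interior_Ici]
          exact fun u hu => (hz u (le_of_lt hu)).differentiableAt.differentiableWithinAt)
    rw [interior_Ici]
    intro u hu
    rw [(hz u (le_of_lt hu)).deriv]
    have hp := hpos u (le_of_lt hu)
    nlinarith [mul_pos (mul_pos hR2 hp.2.1) hp.2.2]
  -- limit
  refine ⟨hC, ?_⟩
  set w : ℝ → ℝ := fun t => z (max t 0) with hwdef
  have hwanti : Antitone w := by
    intro a b hab
    exact hzanti (le_max_right a 0) (le_max_right b 0) (max_le_max hab le_rfl)
  have hwbdd : BddBelow (range w) := by
    refine ⟨z₀ * Real.exp (R₂ * y₀ / C), ?_⟩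
    rintro v ⟨t, rfl⟩
    exact hzlow (max t 0) (le_max_right t 0)
  refine ⟨⨅ t, w t, ?_, ?_, ?_⟩
  · have hw : Tendsto w atTop (nhds (⨅ t, w t)) := tendsto_atTop_ciInf hwanti hwbdd
    refine hw.congr' ?_
    filter_upwards [eventually_ge_atTop (0:ℝ)] with t ht
    simp [hwdef, max_eq_left ht]
  · exact le_ciInf fun t => hzlow (max t 0) (le_max_right t 0)
  · exact lt_of_lt_of_le hm0 (le_ciInf fun t => hzlow (max t 0) (le_max_right t 0))
end

section
/- For the kernel B_β defined above, for any fixed x > 0 and x' > 0 with x ≠ x', B_β(x,x') → 0 as β → ∞. -/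
open Real Filter

/-- The Compton redistribution kernel `B_β(x,x')`, written with
`|𝐱' − 𝐱|² = x² + x'² − 2 x x' t` where `t = cos θ`. -/
noncomputable def Bbeta (m β x x' : ℝ) : ℝ :=
  Real.sqrt β * Real.exp ((x + x') / 2) *
    ∫ t in (-1:ℝ)..1,
      (1 + t^2) / Real.sqrt (x^2 + x'^2 - 2*x*x'*t) *
        Real.exp (-(β * (m * (x - x')^2 +
          (x^2 + x'^2 - 2*x*x'*t)^2 / (4 * m * β^2)) / (2 * (x^2 + x'^2 - 2*x*x'*t))))

theorem stmt17 (m x x' : ℝ) (hm : 0 < m) (hx : 0 < x) (hx' : 0 < x') (hne : x ≠ x') :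
    Tendsto (fun β => Bbeta m β x x') atTop (nhds 0) := by
  have hsub : x - x' ≠ 0 := sub_ne_zero.mpr hne
  have hD : (0:ℝ) < (x - x')^2 := by positivity
  have hS : (0:ℝ) < (x + x')^2 := by positivity
  set c : ℝ := m * (x - x')^2 / (2 * (x + x')^2) with hc
  have hcpos : 0 < c := by positivity
  -- bound on |x-x'|
  have habs : 0 < |x - x'| := abs_pos.mpr hsub
  set C : ℝ := Real.exp ((x + x') / 2) * (2 / |x - x'| * 2) with hC
  have key : ∀ᶠ β in atTop, ‖Bbeta m β x x'‖ ≤ C * (Real.sqrt β * Real.exp (-(c * β))) := by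
    filter_upwards [eventually_gt_atTop (0:ℝ)] with β hβ
    -- pointwise bound on the integrand
    have hbound : ∀ t ∈ Set.uIoc (-1:ℝ) 1,
        ‖(1 + t^2) / Real.sqrt (x^2 + x'^2 - 2*x*x'*t) *
          Real.exp (-(β * (m * (x - x')^2 +
            (x^2 + x'^2 - 2*x*x'*t)^2 / (4 * m * β^2)) / (2 * (x^2 + x'^2 - 2*x*x'*t))))‖
          ≤ 2 / |x - x'| * Real.exp (-(c * β)) := by
      intro t ht
      rw [Set.uIoc_of_le (by norm_num : (-1:ℝ) ≤ 1)] at ht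
      obtain ⟨ht1, ht2⟩ := ht
      set r2 : ℝ := x^2 + x'^2 - 2*x*x'*t with hr2
      have hr2ge : (x - x')^2 ≤ r2 := by nlinarith [hr2, mul_pos hx hx']
      have hr2le : r2 ≤ (x + x')^2 := by nlinarith [hr2, mul_pos hx hx']
      have hr2pos : 0 < r2 := lt_of_lt_of_le hD hr2ge
      have hsqrt : |x - x'| ≤ Real.sqrt r2 := by
        rw [← Real.sqrt_sq_eq_abs]
        exact Real.sqrt_le_sqrt hr2ge
      have hsqrtpos : 0 < Real.sqrt r2 := Real.sqrt_pos.mpr hr2pos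
      have h1 : (1 + t^2) / Real.sqrt r2 ≤ 2 / |x - x'| := by
        apply div_le_div₀ (by positivity) (by nlinarith) habs hsqrt
      have hE : c * β ≤ β * (m * (x - x')^2 + r2^2 / (4 * m * β^2)) / (2 * r2) := by
        have h2 : c * β = β * (m * (x - x')^2) / (2 * (x + x')^2) := by
          rw [hc]; ring
        rw [h2]
        apply div_le_div₀ (by positivity) _ (by positivity) (by linarith)
        have : 0 ≤ r2^2 / (4 * m * β^2) := by positivity
        nlinarith
      have h3 : Real.exp (-(β * (m * (x - x')^2 + r2^2 / (4 * m * β^2)) / (2 * r2)))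
          ≤ Real.exp (-(c * β)) := Real.exp_le_exp.mpr (by linarith)
      rw [Real.norm_eq_abs, abs_mul, abs_of_nonneg (by positivity),
        abs_of_nonneg (Real.exp_nonneg _)]
      exact mul_le_mul h1 h3 (Real.exp_nonneg _) (by positivity)
    have hint := intervalIntegral.norm_integral_le_of_norm_le_const hbound
    have h4 : |(1:ℝ) - (-1)| = 2 := by norm_num
    rw [h4] at hint
    have hBB : ‖Bbeta m β x x'‖ = Real.sqrt β * Real.exp ((x + x') / 2) *
        ‖∫ t in (-1:ℝ)..1,
          (1 + t^2) / Real.sqrt (x^2 + x'^2 - 2*x*x'*t) *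
            Real.exp (-(β * (m * (x - x')^2 +
              (x^2 + x'^2 - 2*x*x'*t)^2 / (4 * m * β^2)) / (2 * (x^2 + x'^2 - 2*x*x'*t))))‖ := by
      rw [Bbeta, Real.norm_eq_abs, abs_mul, abs_mul, abs_of_nonneg (Real.sqrt_nonneg _),
        abs_of_nonneg (Real.exp_nonneg _), Real.norm_eq_abs]
    rw [hBB]
    calc Real.sqrt β * Real.exp ((x + x') / 2) * ‖_‖
        ≤ Real.sqrt β * Real.exp ((x + x') / 2) * (2 / |x - x'| * Real.exp (-(c * β)) * 2) := by
          apply mul_le_mul_of_nonneg_left hint (by positivity)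
      _ = C * (Real.sqrt β * Real.exp (-(c * β))) := by rw [hC]; ring
  have hlim : Tendsto (fun β => C * (Real.sqrt β * Real.exp (-(c * β)))) atTop (nhds 0) := by
    rw [show (0:ℝ) = C * 0 by ring]
    apply Tendsto.const_mul
    have h5 := tendsto_rpow_mul_exp_neg_mul_atTop_nhds_zero (1/2) c hcpos
    apply h5.congr'
    filter_upwards with β
    rw [Real.sqrt_eq_rpow, neg_mul]
  exact squeeze_zero_norm' key hlim
end

section
/- For all β > 0, x > 0, x' > 0: B_β(x,x') ≤ √β · exp(−β(m(x−x')² + (x−x')⁴/(4mβ²))/(2(x+x')²)) · N(x+x', |x−x'|), where N(p,q) = 8 e^{p/2}(10(p+q)² + (p−q)²)/(15(p+q)³). -/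
open Real

/-- The majorant profile `N(p,q)`. -/
noncomputable def Nmaj (p q : ℝ) : ℝ :=
  8 * Real.exp (p / 2) * (10 * (p + q)^2 + (p - q)^2) / (15 * (p + q)^3)

open MeasureTheory Set intervalIntegral

lemma g_intervalIntegrable (x x' : ℝ) (hx : 0 < x) (hx' : 0 < x') :
    IntervalIntegrable (fun t => (1 + t^2) / Real.sqrt (x^2 + x'^2 - 2*x*x'*t)) volume (-1) 1 := by
  have hB : 0 < 2*x*x' := by positivity
  have hmaj : IntervalIntegrable (fun t : ℝ => (2 / Real.sqrt (2*x*x')) * (1 - t) ^ (-(1:ℝ)/2)) volume (-1) 1 := by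
    have h0 : IntervalIntegrable (fun s : ℝ => s ^ (-(1:ℝ)/2)) volume 2 0 :=
      intervalIntegrable_rpow' (by norm_num)
    have h1 := (h0.comp_sub_left 1)
    rw [show (1:ℝ)-2 = -1 by norm_num, show (1:ℝ)-0 = 1 by norm_num] at h1
    exact h1.const_mul _
  refine hmaj.mono_fun' ?_ ?_
  · apply Measurable.aestronglyMeasurable
    fun_prop
  · have hae : ∀ᵐ (t : ℝ) ∂(volume.restrict (Set.uIoc (-1:ℝ) 1)), t ≠ 1 :=
      ae_restrict_of_ae (compl_mem_ae_iff.2 (measure_singleton (1:ℝ)))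
    have hmem : ∀ᵐ (t : ℝ) ∂(volume.restrict (Set.uIoc (-1:ℝ) 1)), t ∈ Set.uIoc (-1:ℝ) 1 :=
      ae_restrict_mem measurableSet_uIoc
    filter_upwards [hae, hmem] with t hne hmem
    rw [Set.uIoc_of_le (by norm_num : (-1:ℝ) ≤ 1)] at hmem
    have ht1 : t < 1 := lt_of_le_of_ne hmem.2 hne
    have ht0 : -1 < t := hmem.1
    have hrt : 2*x*x' * (1 - t) ≤ x^2 + x'^2 - 2*x*x'*t := by nlinarith [sq_nonneg (x - x')]
    have ht1' : (0:ℝ) < 1 - t := by linarith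
    have hpos : 0 < 2*x*x' * (1 - t) := by positivity
    have hg0 : 0 ≤ (1 + t^2) / Real.sqrt (x^2 + x'^2 - 2*x*x'*t) := by positivity
    rw [Real.norm_of_nonneg hg0]
    have hstep : (1 + t^2) / Real.sqrt (x^2 + x'^2 - 2*x*x'*t)
        ≤ 2 / Real.sqrt (2*x*x' * (1 - t)) := by
      apply div_le_div₀ (by norm_num) (by nlinarith) (Real.sqrt_pos.2 hpos)
        (Real.sqrt_le_sqrt hrt)
    refine hstep.trans (le_of_eq ?_)
    have hrr : (1 - t) ^ (-(1:ℝ)/2) = (Real.sqrt (1-t))⁻¹ := by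
      rw [neg_div, Real.rpow_neg ht1'.le, ← Real.sqrt_eq_rpow]
    rw [Real.sqrt_mul hB.le, div_mul_eq_div_div, hrr, div_eq_mul_inv]

lemma g_integral_eq (x x' : ℝ) (hx : 0 < x) (hx' : 0 < x') (hle : x' ≤ x) :
    ∫ t in (-1:ℝ)..1, (1 + t^2) / Real.sqrt (x^2 + x'^2 - 2*x*x'*t)
      = 8 * (10 * ((x+x') + (x-x'))^2 + ((x+x') - (x-x'))^2) / (15 * ((x+x') + (x-x'))^3) := by
  have hB : 0 < 2*x*x' := by positivity
  set A := x^2 + x'^2 with hA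
  set B := 2*x*x' with hBdef
  have hAB : B ≤ A := by nlinarith [sq_nonneg (x - x')]
  set F : ℝ → ℝ := fun t => -(2/B^3) * ((A^2+B^2) * Real.sqrt (A - B*t)
      - (2*A/3) * (Real.sqrt (A - B*t))^3 + (Real.sqrt (A - B*t))^5/5) with hF
  have hr_pos : ∀ t : ℝ, t < 1 → 0 < A - B*t := by
    intro t ht
    have h := mul_pos hB (by linarith : (0:ℝ) < 1 - t)
    nlinarith
  have hFcont : Continuous F := by fun_prop
  have hg_int : IntervalIntegrable (fun t => (1 + t^2) / Real.sqrt (x^2 + x'^2 - 2*x*x'*t)) volume (-1) 1 :=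
    g_intervalIntegrable x x' hx hx'
  have hderiv : ∀ t ∈ Ioo (-1:ℝ) 1, HasDerivAt F ((1 + t^2) / Real.sqrt (x^2 + x'^2 - 2*x*x'*t)) t := by
    intro t ht
    have hrt : 0 < A - B*t := hr_pos t ht.2
    have hs0 : 0 < Real.sqrt (A - B*t) := Real.sqrt_pos.2 hrt
    have hr' : HasDerivAt (fun u : ℝ => A - B*u) (-B) t := by
      simpa using ((hasDerivAt_id t).const_mul B).const_sub A
    have hs : HasDerivAt (fun u => Real.sqrt (A - B*u)) (1/(2*Real.sqrt (A - B*t)) * -B) t :=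
      (Real.hasDerivAt_sqrt hrt.ne').comp t hr'
    have hFd : HasDerivAt F (-(2/B^3) * ((A^2+B^2) * (1/(2*Real.sqrt (A - B*t)) * -B)
        - (2*A/3) * ((3:ℕ) * (Real.sqrt (A - B*t))^2 * (1/(2*Real.sqrt (A - B*t)) * -B))
        + ((5:ℕ) * (Real.sqrt (A - B*t))^4 * (1/(2*Real.sqrt (A - B*t)) * -B))/5)) t := by
      exact (((hs.const_mul (A^2+B^2)).sub ((hs.pow 3).const_mul (2*A/3))).add ((hs.pow 5).div_const 5)).const_mul (-(2/B^3))
    convert hFd using 1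
    have hsq : Real.sqrt (A - B*t) ^ 2 = A - B*t := Real.sq_sqrt hrt.le
    have hsq4 : Real.sqrt (A - B*t) ^ 4 = (A - B*t)^2 := by
      rw [show (4:ℕ) = 2*2 by norm_num, pow_mul, hsq]
    have h1 : x^2 + x'^2 - 2*x*x'*t = A - B*t := by rw [hA, hBdef]; try ring
    rw [h1, hsq4]
    have hs0' := hs0.ne'
    field_simp
    rw [mul_comm t B, hsq]
    ring
  have hJ : ∫ t in (-1:ℝ)..1, (1 + t^2) / Real.sqrt (x^2 + x'^2 - 2*x*x'*t) = F 1 - F (-1) :=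
    integral_eq_sub_of_hasDeriv_right_of_le (by norm_num) hFcont.continuousOn
      (fun t ht => (hderiv t ht).hasDerivWithinAt) hg_int
  rw [hJ]
  simp only [hF]
  have h1 : A - B*1 = (x - x')^2 := by rw [hA, hBdef]; try ring
  have h2 : A - B*(-1) = (x + x')^2 := by rw [hA, hBdef]; try ring
  have hq : (0:ℝ) ≤ x - x' := by linarith
  have hp : (0:ℝ) < x + x' := by linarith
  rw [h1, h2, Real.sqrt_sq hq, Real.sqrt_sq hp.le]
  have hB3 : B^3 ≠ 0 := by positivity
  rw [hA, hBdef]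
  field_simp
  ring

lemma exp_bound (m β x x' t : ℝ) (hm : 0 < m) (hβ : 0 < β) (hx : 0 < x) (hx' : 0 < x')
    (ht : t ∈ Icc (-1:ℝ) 1) :
    Real.exp (-(β * (m * (x - x')^2 + (x^2 + x'^2 - 2*x*x'*t)^2 / (4 * m * β^2)) /
        (2 * (x^2 + x'^2 - 2*x*x'*t))))
      ≤ Real.exp (-(β * (m * (x - x')^2 + (x - x')^4 / (4 * m * β^2)) / (2 * (x + x')^2))) := by
  rw [Real.exp_le_exp, neg_le_neg_iff]
  set r := x^2 + x'^2 - 2*x*x'*t with hr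
  have hq2 : (x - x')^2 ≤ r := by nlinarith [mul_pos hx hx', ht.2]
  have hrp : r ≤ (x + x')^2 := by nlinarith [mul_pos hx hx', ht.1]
  have hqp : (x - x')^2 ≤ (x + x')^2 := by nlinarith [mul_pos hx hx']
  by_cases hr0 : r = 0
  · have hq0 : (x - x')^2 = 0 := le_antisymm (hr0 ▸ hq2) (sq_nonneg _)
    have hx0 : x - x' = 0 := by
      have := sq_eq_zero_iff.mp hq0; exact this
    rw [hr0, hx0]
    norm_num
  · have hrpos : 0 < r := lt_of_le_of_ne (le_trans (sq_nonneg _) hq2) (Ne.symm hr0)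
    have hppos : (0:ℝ) < x + x' := by linarith
    have e1 : β * (m * (x - x')^2 + (x - x')^4 / (4 * m * β^2)) / (2 * (x + x')^2)
        = β*m*(x - x')^2/(2*(x + x')^2) + (x - x')^4/(8*m*β*(x + x')^2) := by
      field_simp
      ring
    have e2 : β * (m * (x - x')^2 + r^2 / (4 * m * β^2)) / (2 * r)
        = β*m*(x - x')^2/(2*r) + r/(8*m*β) := by
      field_simp
      ring
    rw [e1, e2]
    have t1 : β*m*(x - x')^2/(2*(x + x')^2) ≤ β*m*(x - x')^2/(2*r) := by
      apply div_le_div_of_nonneg_left (by positivity) (by positivity)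
      linarith
    have hq4 : (x - x')^4 ≤ r * (x + x')^2 := by
      nlinarith [mul_le_mul hq2 hqp (sq_nonneg (x - x')) hrpos.le]
    have t2 : (x - x')^4/(8*m*β*(x + x')^2) ≤ r/(8*m*β) := by
      rw [div_le_div_iff₀ (by positivity) (by positivity)]
      nlinarith [mul_le_mul_of_nonneg_right hq4 (by positivity : (0:ℝ) ≤ 8*m*β)]
    linarith

lemma Bbeta_symm (m β x x' : ℝ) : Bbeta m β x x' = Bbeta m β x' x := by
  unfold Bbeta
  congr 1
  · rw [add_comm]
  · apply intervalIntegral.integral_congr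
    intro t _
    dsimp only
    rw [show x'^2 + x^2 - 2*x'*x*t = x^2 + x'^2 - 2*x*x'*t by ring,
        show (x' - x)^2 = (x - x')^2 by ring]

lemma key_lemma (m β x x' : ℝ) (hm : 0 < m) (hβ : 0 < β) (hx : 0 < x) (hx' : 0 < x')
    (hle : x' ≤ x) :
    Bbeta m β x x'
      ≤ Real.sqrt β *
          Real.exp (-(β * (m * (x - x')^2 + (x - x')^4 / (4 * m * β^2)) /
            (2 * (x + x')^2))) *
          Nmaj (x + x') |x - x'| := by
  set E₀ := Real.exp (-(β * (m * (x - x')^2 + (x - x')^4 / (4 * m * β^2)) /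
      (2 * (x + x')^2))) with hE₀
  have hg_int := g_intervalIntegrable x x' hx hx'
  have hf_int : IntervalIntegrable (fun t =>
      (1 + t^2) / Real.sqrt (x^2 + x'^2 - 2*x*x'*t) *
        Real.exp (-(β * (m * (x - x')^2 +
          (x^2 + x'^2 - 2*x*x'*t)^2 / (4 * m * β^2)) / (2 * (x^2 + x'^2 - 2*x*x'*t))))) volume (-1) 1 := by
    refine hg_int.mono_fun' ?_ ?_
    · apply Measurable.aestronglyMeasurable
      fun_prop
    · have hmem : ∀ᵐ (t : ℝ) ∂(volume.restrict (Set.uIoc (-1:ℝ) 1)), t ∈ Set.uIoc (-1:ℝ) 1 :=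
        ae_restrict_mem measurableSet_uIoc
      filter_upwards [hmem] with t hmem
      rw [Set.uIoc_of_le (by norm_num : (-1:ℝ) ≤ 1)] at hmem
      have hr0 : (0:ℝ) ≤ x^2 + x'^2 - 2*x*x'*t := by nlinarith [mul_pos hx hx', hmem.2, sq_nonneg (x - x')]
      have hg0 : 0 ≤ (1 + t^2) / Real.sqrt (x^2 + x'^2 - 2*x*x'*t) := by positivity
      have hE1 : Real.exp (-(β * (m * (x - x')^2 +
          (x^2 + x'^2 - 2*x*x'*t)^2 / (4 * m * β^2)) / (2 * (x^2 + x'^2 - 2*x*x'*t)))) ≤ 1 := by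
        rw [Real.exp_le_one_iff, neg_nonpos]
        positivity
      rw [Real.norm_of_nonneg (by positivity)]
      calc (1 + t^2) / Real.sqrt (x^2 + x'^2 - 2*x*x'*t) *
            Real.exp (-(β * (m * (x - x')^2 +
              (x^2 + x'^2 - 2*x*x'*t)^2 / (4 * m * β^2)) / (2 * (x^2 + x'^2 - 2*x*x'*t))))
          ≤ (1 + t^2) / Real.sqrt (x^2 + x'^2 - 2*x*x'*t) * 1 :=
            mul_le_mul_of_nonneg_left hE1 hg0
        _ = (1 + t^2) / Real.sqrt (x^2 + x'^2 - 2*x*x'*t) := mul_one _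
  have hmono : (∫ t in (-1:ℝ)..1,
      (1 + t^2) / Real.sqrt (x^2 + x'^2 - 2*x*x'*t) *
        Real.exp (-(β * (m * (x - x')^2 +
          (x^2 + x'^2 - 2*x*x'*t)^2 / (4 * m * β^2)) / (2 * (x^2 + x'^2 - 2*x*x'*t)))))
      ≤ ∫ t in (-1:ℝ)..1, (1 + t^2) / Real.sqrt (x^2 + x'^2 - 2*x*x'*t) * E₀ := by
    apply intervalIntegral.integral_mono_on (by norm_num) hf_int (hg_int.mul_const E₀)
    intro t ht
    have hr0 : (0:ℝ) ≤ x^2 + x'^2 - 2*x*x'*t := by nlinarith [mul_pos hx hx', ht.2, sq_nonneg (x - x')]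
    have hg0 : 0 ≤ (1 + t^2) / Real.sqrt (x^2 + x'^2 - 2*x*x'*t) := by positivity
    exact mul_le_mul_of_nonneg_left (exp_bound m β x x' t hm hβ hx hx' ht) hg0
  have hconst : (∫ t in (-1:ℝ)..1, (1 + t^2) / Real.sqrt (x^2 + x'^2 - 2*x*x'*t) * E₀)
      = (8 * (10 * ((x+x') + (x-x'))^2 + ((x+x') - (x-x'))^2) / (15 * ((x+x') + (x-x'))^3)) * E₀ := by
    rw [intervalIntegral.integral_mul_const, g_integral_eq x x' hx hx' hle]
  have hpre : 0 < Real.sqrt β * Real.exp ((x + x') / 2) := by positivity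
  have hchain : Bbeta m β x x' ≤ Real.sqrt β * Real.exp ((x + x') / 2) *
      ((8 * (10 * ((x+x') + (x-x'))^2 + ((x+x') - (x-x'))^2) / (15 * ((x+x') + (x-x'))^3)) * E₀) := by
    rw [Bbeta]
    apply mul_le_mul_of_nonneg_left _ hpre.le
    rw [← hconst]
    exact hmono
  refine hchain.trans (le_of_eq ?_)
  rw [Nmaj]
  have habs : |x - x'| = x - x' := abs_of_nonneg (by linarith)
  rw [habs]
  ring

theorem stmt18 (m β x x' : ℝ) (hm : 0 < m) (hβ : 0 < β) (hx : 0 < x) (hx' : 0 < x') :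
    Bbeta m β x x'
      ≤ Real.sqrt β *
          Real.exp (-(β * (m * (x - x')^2 + (x - x')^4 / (4 * m * β^2)) /
            (2 * (x + x')^2))) *
          Nmaj (x + x') |x - x'| := by
  rcases le_total x' x with h | h
  · exact key_lemma m β x x' hm hβ hx hx' h
  · have hs := Bbeta_symm m β x x'
    have this' := key_lemma m β x' x hm hβ hx' hx h
    have e1 : x + x' = x' + x := add_comm x x'
    have e2 : |x - x'| = |x' - x| := abs_sub_comm x x'
    have e3 : (x - x')^2 = (x' - x)^2 := by ring
    have e4 : (x - x')^4 = (x' - x)^4 := by ring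
    rw [hs, e1, e2, e3, e4]
    exact this'
end
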